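/- Let f : ℝ^N → ℝ be bounded below by f*. Suppose a sequence (x_t)_{t≥0} in a set C ⊆ ℝ^N, together with search directions g_t and stepsizes s_t ≥ s_min > 0, satisfies the sufficient decrease condition f(x_t) − f(x_{t+1}) ≥ s_t · a · ⟨−∇f(x_t), g_t⟩ and the angle condition ⟨−∇f(x_t), g_t⟩ ≥ ω · m_t · ‖g_t‖ together with ‖g_t‖ ≥ ω · m_t, where m_t ≥ 0 is a stationarity measure and a, ω ∈ (0,1]. Then m_t → 0 as t → ∞, and for any ε > 0, the number of indices t with m_t ≥ ε is at most f(x_0) − f* divided by s_min · a · ω² · ε². -/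

import Mathlib

open scoped RealInnerProductSpace

/-- abstract global convergence of the gradient-related approximate
projection method: the stationarity measure tends to zero, and the number of
ε-nonstationary iterates is bounded. -/
theorem stmt5 {N : ℕ} (f : EuclideanSpace ℝ (Fin N) → ℝ) (fstar : ℝ)
    (hbdd : ∀ y, fstar ≤ f y)
    (x g : ℕ → EuclideanSpace ℝ (Fin N)) (s m : ℕ → ℝ)
    (smin a ω : ℝ) (hsmin : 0 < smin)
    (ha : 0 < a ∧ a ≤ 1) (hω : 0 < ω ∧ ω ≤ 1)
    (hs : ∀ t, smin ≤ s t) (hm : ∀ t, 0 ≤ m t)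
    (hdec : ∀ t, s t * a * ⟪-gradient f (x t), g t⟫ ≤ f (x t) - f (x (t + 1)))
    (hangle : ∀ t, ω * m t * ‖g t‖ ≤ ⟪-gradient f (x t), g t⟫)
    (hangle' : ∀ t, ω * m t ≤ ‖g t‖) :
    Filter.Tendsto m Filter.atTop (nhds 0) ∧
    ∀ ε : ℝ, 0 < ε → ∀ T : Finset ℕ, (∀ t ∈ T, ε ≤ m t) →
      (T.card : ℝ) ≤ (f (x 0) - fstar) / (smin * a * ω ^ 2 * ε ^ 2) := by
  obtain ⟨ha0, _⟩ := ha
  obtain ⟨hω0, _⟩ := hω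
  set c := smin * a * ω ^ 2 with hc
  have hcpos : 0 < c := by positivity
  -- key step inequality
  have step : ∀ t, c * m t ^ 2 ≤ f (x t) - f (x (t + 1)) := by
    intro t
    have hmt := hm t
    have h1 : ω * m t * (ω * m t) ≤ ω * m t * ‖g t‖ :=
      mul_le_mul_of_nonneg_left (hangle' t) (by positivity)
    have h2 : ω ^ 2 * m t ^ 2 ≤ ⟪-gradient f (x t), g t⟫ := by
      nlinarith [hangle t]
    have hinner : (0:ℝ) ≤ ⟪-gradient f (x t), g t⟫ :=
      le_trans (by positivity) h2
    have h3 : smin * a * (ω ^ 2 * m t ^ 2) ≤ s t * a * ⟪-gradient f (x t), g t⟫ := by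
      calc smin * a * (ω ^ 2 * m t ^ 2)
          ≤ smin * a * ⟪-gradient f (x t), g t⟫ :=
            mul_le_mul_of_nonneg_left h2 (by positivity)
        _ ≤ s t * a * ⟪-gradient f (x t), g t⟫ :=
            mul_le_mul_of_nonneg_right
              (mul_le_mul_of_nonneg_right (hs t) ha0.le) hinner
    calc c * m t ^ 2 = smin * a * (ω ^ 2 * m t ^ 2) := by ring
      _ ≤ s t * a * ⟪-gradient f (x t), g t⟫ := h3
      _ ≤ f (x t) - f (x (t + 1)) := hdec t
  -- partial sums bounded
  have hsum : ∀ n, ∑ t ∈ Finset.range n, c * m t ^ 2 ≤ f (x 0) - fstar := by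
    intro n
    calc ∑ t ∈ Finset.range n, c * m t ^ 2
        ≤ ∑ t ∈ Finset.range n, (f (x t) - f (x (t + 1))) :=
          Finset.sum_le_sum fun t _ => step t
      _ = f (x 0) - f (x n) := by
          rw [Finset.sum_range_sub' (fun i => f (x i)) n]
      _ ≤ f (x 0) - fstar := by linarith [hbdd (x n)]
  have hnonneg : ∀ t, 0 ≤ c * m t ^ 2 := fun t => by
    have := hm t; positivity
  have hsummable : Summable (fun t => c * m t ^ 2) :=
    summable_of_sum_range_le hnonneg hsum
  constructor
  · have h0 : Filter.Tendsto (fun t => c * m t ^ 2) Filter.atTop (nhds 0) :=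
      hsummable.tendsto_atTop_zero
    have h1 : Filter.Tendsto (fun t => m t ^ 2) Filter.atTop (nhds 0) := by
      have h := h0.const_mul c⁻¹
      rw [mul_zero] at h
      convert h using 2 with t
      field_simp
    have h2 : Filter.Tendsto (fun t => Real.sqrt (m t ^ 2)) Filter.atTop (nhds 0) := by
      simpa [Function.comp_def] using (Real.continuous_sqrt.tendsto 0).comp h1
    convert h2 using 2 with t
    rw [Real.sqrt_sq (hm t)]
  · intro ε hε T hT
    have htsum : ∑' t, c * m t ^ 2 ≤ f (x 0) - fstar :=
      hsummable.tsum_le_of_sum_range_le hsum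
    have hTsum : ∑ t ∈ T, c * m t ^ 2 ≤ ∑' t, c * m t ^ 2 :=
      hsummable.sum_le_tsum T (fun t _ => hnonneg t)
    have hlow : ∑ t ∈ T, c * ε ^ 2 ≤ ∑ t ∈ T, c * m t ^ 2 :=
      Finset.sum_le_sum fun t ht => by
        have h := hT t ht
        have h2 : ε ^ 2 ≤ m t ^ 2 := by nlinarith [hm t]
        exact mul_le_mul_of_nonneg_left h2 hcpos.le
    rw [Finset.sum_const, nsmul_eq_mul] at hlow
    have hfin : (T.card : ℝ) * (c * ε ^ 2) ≤ f (x 0) - fstar := by linarith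
    rw [le_div_iff₀ (by positivity : (0:ℝ) < smin * a * ω ^ 2 * ε ^ 2)]
    rw [hc] at hfin
    linarith
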